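/- Let A ∈ ℝ^{m×N} and H ∈ ℝ^{r×N}. Then {u ∈ ℝ^N : Au = 0, Hu ≥ 0} = {0} if and only if the following two conditions hold: (i) {u ∈ ℝ^N : Au = 0, Hu = 0} = {0}; and (ii) there exist z ∈ ℝ^m and z' ∈ ℝ^r with all components of z' strictly positive such that AᵀZ = Hᵀz'. -/

import Mathlib

open Finset

/-- The cone generated by a finite family of vectors. -/
private def coneSet {ι : Type*} [Fintype ι] {n : ℕ} (v : ι → (Fin n → ℝ)) :
    Set (Fin n → ℝ) :=
  {x | ∃ c : ι → ℝ, (∀ i, 0 ≤ c i) ∧ ∑ i, c i • v i = x}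

private lemma isClosed_cone_of_linIndep {ι : Type*} [Fintype ι] {n : ℕ}
    {v : ι → (Fin n → ℝ)} (hv : LinearIndependent ℝ v) :
    IsClosed (coneSet v) := by
  let f : (ι → ℝ) →ₗ[ℝ] (Fin n → ℝ) :=
    { toFun := fun c => ∑ i, c i • v i
      map_add' := by
        intro a b; simp [add_smul, Finset.sum_add_distrib]
      map_smul' := by
        intro t a; simp [smul_smul, Finset.smul_sum] }
  have hker : LinearMap.ker f = ⊥ := by
    rw [LinearMap.ker_eq_bot']
    intro c hc
    exact funext fun i => Fintype.linearIndependent_iff.mp hv c hc i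
  have hemb : Topology.IsClosedEmbedding f := LinearMap.isClosedEmbedding_of_injective hker
  have hset : coneSet v = f '' {c | ∀ i, 0 ≤ c i} := by
    ext x
    constructor
    · rintro ⟨c, hc, rfl⟩; exact ⟨c, hc, rfl⟩
    · rintro ⟨c, hc, rfl⟩; exact ⟨c, hc, rfl⟩
  rw [hset]
  refine hemb.isClosedMap _ ?_
  have : {c : ι → ℝ | ∀ i, 0 ≤ c i} = ⋂ i, (fun c : ι → ℝ => c i) ⁻¹' Set.Ici 0 := by
    ext c; simp [Set.mem_iInter]
  rw [this]
  exact isClosed_iInter fun i => isClosed_Ici.preimage (continuous_apply i)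

private lemma cone_caratheodory {ι : Type*} [Fintype ι] {n : ℕ}
    (v : ι → (Fin n → ℝ)) :
    ∀ (k : ℕ) (c : ι → ℝ), (∀ i, 0 ≤ c i) →
      ({i | c i ≠ 0} : Set ι).toFinset.card ≤ k →
      ∃ (T : Finset ι) (d : ι → ℝ), LinearIndependent ℝ (fun i : T => v (i : ι)) ∧
        (∀ i, 0 ≤ d i) ∧ (∀ i ∉ T, d i = 0) ∧ ∑ i, d i • v i = ∑ i, c i • v i := by
  classical
  intro k
  induction k with
  | zero =>
    intro c hc hcard
    have hc0 : ∀ i, c i = 0 := by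
      intro i
      by_contra h
      have : i ∈ ({i | c i ≠ 0} : Set ι).toFinset := by simpa using h
      have := Finset.card_pos.mpr ⟨i, this⟩
      omega
    refine ⟨∅, c, ?_, hc, fun i _ => hc0 i, rfl⟩
    have : IsEmpty ((∅ : Finset ι) : Type _) := by
      simp [Finset.isEmpty_coe_sort]; exact ⟨fun x => x.2⟩
    exact linearIndependent_empty_type
  | succ k ih =>
    intro c hc hcard
    set T : Finset ι := ({i | c i ≠ 0} : Set ι).toFinset with hT
    have hmemT : ∀ i, i ∈ T ↔ c i ≠ 0 := by intro i; simp [hT]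
    by_cases hind : LinearIndependent ℝ (fun i : T => v (i : ι))
    · exact ⟨T, c, hind, hc, fun i hi => by simpa using (hmemT i).not.mp hi, rfl⟩
    · obtain ⟨g, hg0, j, hgj⟩ := Fintype.not_linearIndependent_iff.mp hind
      -- extend g to a relation w on ι with a positive entry
      have key : ∃ w : ι → ℝ, (∀ i ∉ T, w i = 0) ∧ (∑ i, w i • v i = 0) ∧ ∃ i, 0 < w i := by
        set w₀ : ι → ℝ := fun i => if h : i ∈ T then g ⟨i, h⟩ else 0 with hw₀
        have hzero : ∀ i ∉ T, w₀ i = 0 := fun i hi => by simp [hw₀, hi]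
        have hsum : ∑ i, w₀ i • v i = 0 := by
          rw [← Finset.sum_subset T.subset_univ (fun i _ hi => by simp [hzero i hi])]
          rw [← Finset.sum_attach T (fun i => w₀ i • v i)]
          simpa [hw₀] using hg0
        rcases lt_or_gt_of_ne hgj with hneg | hpos
        · refine ⟨-w₀, fun i hi => by simp [hzero i hi], by
            simpa [neg_smul, Finset.sum_neg_distrib] using congrArg Neg.neg hsum, ⟨j, ?_⟩⟩
          have : w₀ (j : ι) = g j := by simp [hw₀]
          simp [this]; linarith
        · exact ⟨w₀, hzero, hsum, ⟨j, by simp [hw₀]; exact hpos⟩⟩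
      obtain ⟨w, hwz, hwsum, i₁, hi₁⟩ := key
      -- minimize c i / w i over positive entries of w
      obtain ⟨i₀, hi₀P, hmin⟩ :=
        Finset.exists_min_image (Finset.univ.filter fun i => 0 < w i)
          (fun i => c i / w i) ⟨i₁, by simp [hi₁]⟩
      have hwi₀ : 0 < w i₀ := by simpa using hi₀P
      set t : ℝ := c i₀ / w i₀ with ht
      have ht0 : 0 ≤ t := div_nonneg (hc i₀) hwi₀.le
      set c' : ι → ℝ := fun i => c i - t * w i with hc'
      have hc'nonneg : ∀ i, 0 ≤ c' i := by
        intro i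
        rcases le_or_gt (w i) 0 with hw | hw
        · have : t * w i ≤ 0 := mul_nonpos_of_nonneg_of_nonpos ht0 hw
          simp only [hc']; linarith [hc i]
        · have := hmin i (by simp [hw])
          rw [le_div_iff₀ hw] at this
          simp only [hc']; linarith
      have hi₀T : i₀ ∈ T := by
        by_contra h
        exact absurd (hwz i₀ h) (ne_of_gt hwi₀)
      have hc'supp : ∀ i, c' i ≠ 0 → i ∈ T.erase i₀ := by
        intro i hi
        rcases eq_or_ne i i₀ with rfl | hne
        · exfalso; apply hi; simp [hc', ht, div_mul_cancel₀ _ (ne_of_gt hwi₀)]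
        · refine Finset.mem_erase.mpr ⟨hne, ?_⟩
          rw [hmemT]
          intro hci
          rcases Finset.mem_filter.mp hi₀P with _
          by_cases hiT : i ∈ T
          · exact (hmemT i).mp hiT hci
          · exact hi (by simp [hc', hci, hwz i hiT])
      have hTcard : T.card ≤ k + 1 := hcard
      have hcard' : ({i | c' i ≠ 0} : Set ι).toFinset.card ≤ k := by
        have hsub : ({i | c' i ≠ 0} : Set ι).toFinset ⊆ T.erase i₀ := by
          intro i hi
          exact hc'supp i (by simpa using hi)
        calc ({i | c' i ≠ 0} : Set ι).toFinset.card ≤ (T.erase i₀).card :=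
              Finset.card_le_card hsub
          _ = T.card - 1 := Finset.card_erase_of_mem hi₀T
          _ ≤ k := by omega
      have hsum' : ∑ i, c' i • v i = ∑ i, c i • v i := by
        simp only [hc', sub_smul, Finset.sum_sub_distrib, mul_smul]
        rw [← Finset.smul_sum, hwsum, smul_zero, sub_zero]
      obtain ⟨T', d, h1, h2, h3, h4⟩ := ih c' hc'nonneg hcard'
      exact ⟨T', d, h1, h2, h3, h4.trans hsum'⟩

private lemma isClosed_coneSet {ι : Type*} [Fintype ι] {n : ℕ} (v : ι → (Fin n → ℝ)) :
    IsClosed (coneSet v) := by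
  classical
  have hunion : coneSet v = ⋃ T : Finset ι,
      {x | LinearIndependent ℝ (fun i : T => v (i : ι)) ∧
        ∃ c : ι → ℝ, (∀ i, 0 ≤ c i) ∧ (∀ i ∉ T, c i = 0) ∧ ∑ i, c i • v i = x} := by
    ext x
    constructor
    · rintro ⟨c, hc, rfl⟩
      obtain ⟨T, d, h1, h2, h3, h4⟩ := cone_caratheodory v _ c hc le_rfl
      exact Set.mem_iUnion.mpr ⟨T, h1, d, h2, h3, h4⟩
    · rintro h
      obtain ⟨T, _, c, hc, _, rfl⟩ := Set.mem_iUnion.mp h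
      exact ⟨c, hc, rfl⟩
  rw [hunion]
  apply isClosed_iUnion_of_finite
  intro T
  by_cases hT : LinearIndependent ℝ (fun i : T => v (i : ι))
  · have : {x | LinearIndependent ℝ (fun i : T => v (i : ι)) ∧
        ∃ c : ι → ℝ, (∀ i, 0 ≤ c i) ∧ (∀ i ∉ T, c i = 0) ∧ ∑ i, c i • v i = x}
        = coneSet (fun i : T => v (i : ι)) := by
      ext x
      constructor
      · rintro ⟨-, c, hc, hcz, rfl⟩
        refine ⟨fun i => c i, fun i => hc i, ?_⟩
        rw [Finset.sum_coe_sort T (fun i => c i • v i)]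
        exact Finset.sum_subset T.subset_univ (fun i _ hi => by simp [hcz i hi])
      · rintro ⟨e, he, rfl⟩
        refine ⟨hT, fun i => if h : i ∈ T then e ⟨i, h⟩ else 0,
          fun i => by by_cases h : i ∈ T <;> simp [h, he], fun i hi => by simp [hi], ?_⟩
        rw [← Finset.sum_subset T.subset_univ (fun i _ hi => by simp [hi]),
          ← Finset.sum_attach T (fun i => (if h : i ∈ T then e ⟨i, h⟩ else 0) • v i)]
        exact Finset.sum_congr rfl fun i _ => by simp
    rw [this]
    exact isClosed_cone_of_linIndep hT
  · convert isClosed_empty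
    ext x
    simp [hT]

private lemma convex_coneSet {ι : Type*} [Fintype ι] {n : ℕ} (v : ι → (Fin n → ℝ)) :
    Convex ℝ (coneSet v) := by
  rintro x ⟨c, hc, rfl⟩ y ⟨d, hd, rfl⟩ a b ha hb _
  refine ⟨fun i => a * c i + b * d i,
    fun i => add_nonneg (mul_nonneg ha (hc i)) (mul_nonneg hb (hd i)), ?_⟩
  simp [add_smul, mul_smul, Finset.sum_add_distrib, Finset.smul_sum]

/-- Farkas-type separation: if `b` is not in the cone generated by `v`, there is a
linear functional nonpositive on all generators and positive at `b`. -/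
private lemma farkas_sep {ι : Type*} [Fintype ι] {n : ℕ} (v : ι → (Fin n → ℝ))
    (b : Fin n → ℝ) (hb : b ∉ coneSet v) :
    ∃ f : (Fin n → ℝ) →L[ℝ] ℝ, (∀ i, f (v i) ≤ 0) ∧ 0 < f b := by
  classical
  obtain ⟨f, u, hfs, hfb⟩ :=
    geometric_hahn_banach_closed_point (convex_coneSet v) (isClosed_coneSet v) hb
  have h0 : (0 : Fin n → ℝ) ∈ coneSet v := ⟨0, fun i => le_rfl, by simp⟩
  have hu0 : 0 < u := by simpa using hfs 0 h0
  refine ⟨f, fun i => ?_, hu0.trans hfb⟩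
  by_contra h
  push_neg at h
  have hmem : ∀ t : ℝ, 0 ≤ t → t • v i ∈ coneSet v := by
    intro t ht
    refine ⟨fun j => if j = i then t else 0, fun j => by by_cases hj : j = i <;> simp [hj, ht], ?_⟩
    simp [ite_smul, Finset.sum_ite_eq']
  have := hfs _ (hmem ((u + 1) / f (v i)) (div_nonneg (by linarith) h.le))
  rw [map_smul, smul_eq_mul, div_mul_cancel₀ _ (ne_of_gt h)] at this
  linarith



/-- Lemma 3.2: `{u : Au = 0, Hu ≥ 0} = {0}` iff
(i) `{u : Au = 0, Hu = 0} = {0}` and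
(ii) there exist `z` and `z' > 0` with `Aᵀz = Hᵀz'`. -/
theorem dual_lin_constraint
    (m r N : ℕ) (A : Matrix (Fin m) (Fin N) ℝ) (H : Matrix (Fin r) (Fin N) ℝ) :
    ({u : Fin N → ℝ | A.mulVec u = 0 ∧ ∀ i, 0 ≤ H.mulVec u i} = {0}) ↔
    (({u : Fin N → ℝ | A.mulVec u = 0 ∧ H.mulVec u = 0} = {0}) ∧
      ∃ (z : Fin m → ℝ) (z' : Fin r → ℝ), (∀ i, 0 < z' i) ∧
        A.transpose.mulVec z = H.transpose.mulVec z') := by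
  classical
  constructor
  · intro h
    have hzero : ∀ u : Fin N → ℝ, A.mulVec u = 0 → (∀ i, 0 ≤ H.mulVec u i) → u = 0 := by
      intro u h1 h2
      have : u ∈ ({0} : Set (Fin N → ℝ)) := h ▸ (Set.mem_setOf.mpr ⟨h1, h2⟩)
      simpa using this
    constructor
    · apply Set.eq_singleton_iff_unique_mem.mpr
      refine ⟨⟨Matrix.mulVec_zero A, Matrix.mulVec_zero H⟩, ?_⟩
      rintro u ⟨h1, h2⟩
      exact hzero u h1 (fun i => le_of_eq (congrFun h2 i).symm)
    · by_contra hno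
      push_neg at hno
      -- generators of the cone {Aᵀ y - Hᵀ s : s ≥ 0}
      set v : (Fin m ⊕ Fin m ⊕ Fin r) → (Fin N → ℝ) := fun i =>
        Sum.elim (fun p => fun j => A p j)
          (Sum.elim (fun p => fun j => -A p j) (fun q => fun j => -H q j)) i with hv
      set b : Fin N → ℝ := fun j => ∑ q, H q j with hbdef
      have hb : b ∉ coneSet v := by
        rintro ⟨c, hc, hsum⟩
        set z : Fin m → ℝ := fun p => c (Sum.inl p) - c (Sum.inr (Sum.inl p)) with hz
        set z' : Fin r → ℝ := fun q => 1 + c (Sum.inr (Sum.inr q)) with hz'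
        refine hno z z' (fun q => by simp [hz']; linarith [hc (Sum.inr (Sum.inr q))]) ?_
        funext j
        have hj := congrFun hsum j
        simp only [Finset.sum_apply, Pi.smul_apply, smul_eq_mul, hv, hbdef] at hj
        rw [Fintype.sum_sum_type] at hj
        rw [Fintype.sum_sum_type] at hj
        simp only [Sum.elim_inl, Sum.elim_inr, mul_neg] at hj
        rw [Finset.sum_neg_distrib, Finset.sum_neg_distrib] at hj
        simp only [Matrix.mulVec, dotProduct, Matrix.transpose_apply, hz, hz',
          mul_sub, mul_add, mul_one, Finset.sum_sub_distrib, Finset.sum_add_distrib]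
        have e1 : ∑ p, A p j * c (Sum.inl p) = ∑ p, c (Sum.inl p) * A p j :=
          Finset.sum_congr rfl (fun _ _ => mul_comm _ _)
        have e2 : ∑ p, A p j * c (Sum.inr (Sum.inl p))
            = ∑ p, c (Sum.inr (Sum.inl p)) * A p j :=
          Finset.sum_congr rfl (fun _ _ => mul_comm _ _)
        have e3 : ∑ q, H q j * c (Sum.inr (Sum.inr q))
            = ∑ q, c (Sum.inr (Sum.inr q)) * H q j :=
          Finset.sum_congr rfl (fun _ _ => mul_comm _ _)
        rw [e1, e2, e3]
        linarith [hj]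
      obtain ⟨f, hfv, hfb⟩ := farkas_sep v b hb
      set u : Fin N → ℝ := fun i => f (fun j => if i = j then 1 else 0) with hu
      have hf : ∀ x : Fin N → ℝ, f x = ∑ i, x i * u i := by
        intro x
        conv_lhs => rw [pi_eq_sum_univ x]
        rw [map_sum]
        exact Finset.sum_congr rfl (fun i _ => by rw [map_smul, smul_eq_mul, hu])
      have hAu : A.mulVec u = 0 := by
        funext p
        have h1 : f (fun j => A p j) ≤ 0 := hfv (Sum.inl p)
        have h2 : f (fun j => -A p j) ≤ 0 := hfv (Sum.inr (Sum.inl p))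
        have hneg : (fun j => -A p j) = -(fun j => A p j) := rfl
        rw [hneg, map_neg] at h2
        have : f (fun j => A p j) = 0 := le_antisymm h1 (by linarith)
        rw [hf] at this
        simpa [Matrix.mulVec, dotProduct] using this
      have hHu : ∀ q, 0 ≤ H.mulVec u q := by
        intro q
        have h2 : f (fun j => -H q j) ≤ 0 := hfv (Sum.inr (Sum.inr q))
        have hneg : (fun j => -H q j) = -(fun j => H q j) := rfl
        rw [hneg, map_neg] at h2
        have : 0 ≤ f (fun j => H q j) := by linarith
        rw [hf] at this
        simpa [Matrix.mulVec, dotProduct] using this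
      have hu0 : u = 0 := hzero u hAu hHu
      rw [hf, hu0] at hfb
      simp at hfb
  · rintro ⟨hi, z, z', hz', hzz⟩
    apply Set.eq_singleton_iff_unique_mem.mpr
    refine ⟨⟨Matrix.mulVec_zero A, fun i => by simp [Matrix.mulVec_zero H]⟩, ?_⟩
    rintro u ⟨h1, h2⟩
    -- ⟪Aᵀz, u⟫ = ⟪z, Au⟫ = 0 and ⟪Hᵀz', u⟫ = ⟪z', Hu⟫ ≥ 0 with equality iff Hu = 0
    have key : dotProduct z' (H.mulVec u) = 0 := by
      have e1 : dotProduct (A.transpose.mulVec z) u = dotProduct z (A.mulVec u) := by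
        rw [Matrix.mulVec_transpose, ← Matrix.dotProduct_mulVec]
      have e2 : dotProduct (H.transpose.mulVec z') u = dotProduct z' (H.mulVec u) := by
        rw [Matrix.mulVec_transpose, ← Matrix.dotProduct_mulVec]
      rw [← e2, ← hzz, e1, h1, dotProduct_zero]
    have hHu : H.mulVec u = 0 := by
      funext q
      have hterms : ∀ q' ∈ Finset.univ, 0 ≤ z' q' * H.mulVec u q' :=
        fun q' _ => mul_nonneg (hz' q').le (h2 q')
      have := (Finset.sum_eq_zero_iff_of_nonneg hterms).mp key q (Finset.mem_univ q)
      have := (mul_eq_zero.mp this).resolve_left (ne_of_gt (hz' q))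
      simpa using this
    have : u ∈ ({0} : Set (Fin N → ℝ)) := hi ▸ (Set.mem_setOf.mpr ⟨h1, hHu⟩)
    simpa using this
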